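/- Let M ≥ 3 be an odd integer, n ∈ {1,2}, and Θ̄ = (θ̄_1,…,θ̄_{M-1}) with θ̄_k := k n π / M (and θ̄_j := j n π / M for any integer j). Then for all l, m ∈ {1,…,M-1}: sin²(θ̄_1) · [∇Ḡ(Θ̄)]_{lm} = (-1)^m cos(2θ̄_m) sin(2θ̄_1) if l = m; sin²(θ̄_1) · [∇Ḡ(Θ̄)]_{lm} = (-1)^m sin(2θ̄_1)(cos(2θ̄_m) - (-1)^l cos(2θ̄_{l-m})) if l < m; and sin²(θ̄_1) · [∇Ḡ(Θ̄)]_{lm} = (-1)^m sin(2θ̄_1)(cos(2θ̄_m) + (-1)^l cos(2θ̄_{l-m})) if m < l. -/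

import Mathlib

open Complex Real Finset

noncomputable section

/-- The angles `θ_0 = 0`, `θ_j = Θ_j` for `1 ≤ j ≤ M-1`, read off a vector `Θ ∈ ℝ^{M-1}`. -/
def thN (M : ℕ) (Θ : Fin (M - 1) → ℝ) (j : ℕ) : ℝ :=
  if h : 1 ≤ j ∧ j ≤ M - 1 then Θ ⟨j - 1, by omega⟩ else 0

/-- `𝒦̄(Θ)`. -/
def KbarV (M : ℕ) (Θ : Fin (M - 1) → ℝ) : ℂ :=
  (1 + (-1 : ℂ) ^ M) / 2 +
    (-1 : ℂ) ^ M * ∑ k ∈ Finset.Icc 1 (M - 1),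
      (-1 : ℂ) ^ k * Complex.exp (-2 * Complex.I * (thN M Θ k : ℂ))

/-- `𝓗̄_l(Θ)`. -/
def HbarV (M : ℕ) (Θ : Fin (M - 1) → ℝ) (l : ℕ) : ℂ :=
  (1 - (-1 : ℂ) ^ M) / 2 +
    (∑ k ∈ Finset.range l,
      (-1 : ℂ) ^ (l + k) * Complex.exp (2 * Complex.I * ((thN M Θ l - thN M Θ k : ℝ) : ℂ))) +
    (-1 : ℂ) ^ M * ∑ k ∈ Finset.Icc l (M - 1),
      (-1 : ℂ) ^ (l + k) * Complex.exp (2 * Complex.I * ((thN M Θ l - thN M Θ k : ℝ) : ℂ))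

/-- `Ḡ_l(Θ) = Re(𝓗̄_l(Θ)/𝒦̄(Θ))`. -/
def GbarV (M : ℕ) (l : ℕ) (Θ : Fin (M - 1) → ℝ) : ℝ := (HbarV M Θ l / KbarV M Θ).re

/-- The partial derivative `∂Ḡ_l/∂θ_m` at `Θ` (here `m : Fin (M-1)` indexes `θ_{m+1}`). -/
def partialG (M : ℕ) (l : ℕ) (Θ : Fin (M - 1) → ℝ) (m : Fin (M - 1)) : ℝ :=
  deriv (fun t : ℝ => GbarV M l (Function.update Θ m t)) (Θ m)

/-- The vector `Θ̄ = (θ̄_1, …, θ̄_{M-1})`, `θ̄_k = k n π / M`. -/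
def ThbarV (M n : ℕ) : Fin (M - 1) → ℝ := fun k => ((k : ℕ) + 1) * n * π / M

/-- The angles `θ̄_j = j n π / M`, for an arbitrary integer `j`. -/
def thbarZ (M n : ℕ) (j : ℤ) : ℝ := (j : ℝ) * n * π / M

/-! ### Auxiliary material -/

section Aux

variable {M n : ℕ}

/-- θ₁ as a real number -/
def th1 (M n : ℕ) : ℝ := (n : ℝ) * π / M

lemma th1_mem (hM : 3 ≤ M) (hn : n = 1 ∨ n = 2) : 0 < th1 M n ∧ th1 M n < π := by
  have hMpos : (0:ℝ) < M := by positivity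
  have hpi := Real.pi_pos
  constructor
  · apply div_pos
    · rcases hn with h | h <;> rw [h] <;> norm_num <;> positivity
    · exact hMpos
  · unfold th1
    rw [div_lt_iff₀ hMpos]
    have hn2 : (n : ℝ) ≤ 2 := by rcases hn with h | h <;> rw [h] <;> norm_num
    have hM3 : (3:ℝ) ≤ M := by exact_mod_cast hM
    nlinarith

lemma sin_th1_pos (hM : 3 ≤ M) (hn : n = 1 ∨ n = 2) : 0 < Real.sin (th1 M n) :=
  Real.sin_pos_of_pos_of_lt_pi (th1_mem hM hn).1 (th1_mem hM hn).2

lemma cos_th1_ne (hM : 3 ≤ M) (hModd : Odd M) (hn : n = 1 ∨ n = 2) :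
    Real.cos (th1 M n) ≠ 0 := by
  intro h
  rw [Real.cos_eq_zero_iff] at h
  obtain ⟨k, hk⟩ := h
  unfold th1 at hk
  have hMpos : (0:ℝ) < M := by positivity
  have hpi := Real.pi_ne_zero
  have h2 : (n : ℝ) * 2 = (2 * k + 1) * M := by
    have h' : ((n:ℝ)*2)*π = ((2*(k:ℝ)+1)*(M:ℝ))*π := by
      field_simp at hk
      linear_combination π * hk
    exact mul_right_cancel₀ hpi h'
  have h3 : (n : ℤ) * 2 = (2 * k + 1) * M := by exact_mod_cast h2
  have hodd : Odd ((2*k+1)*(M:ℤ)) := Odd.mul ⟨k, by ring⟩ (by exact_mod_cast hModd)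
  have heven : Even ((n:ℤ)*2) := ⟨n, by ring⟩
  rw [h3] at heven
  exact (Int.not_odd_iff_even.mpr heven) hodd

lemma thN_thbar (M n : ℕ) (j : ℕ) (hj : j ≤ M - 1) :
    thN M (ThbarV M n) j = thbarZ M n j := by
  unfold thN ThbarV thbarZ
  rcases Nat.eq_zero_or_pos j with h | h
  · simp [h]
  · rw [dif_pos ⟨h, hj⟩]
    push_cast [Nat.cast_sub h]
    ring

lemma thN_update (M : ℕ) (Θ : Fin (M - 1) → ℝ) (i : Fin (M - 1)) (t : ℝ) (j : ℕ) :
    thN M (Function.update Θ i t) j = if j = i.val + 1 then t else thN M Θ j := by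
  unfold thN
  by_cases hj : j = i.val + 1
  · have hr : 1 ≤ j ∧ j ≤ M - 1 := ⟨by omega, by have := i.isLt; omega⟩
    rw [dif_pos hr, if_pos hj]
    have : (⟨j - 1, by omega⟩ : Fin (M-1)) = i := by
      apply Fin.ext; simp; omega
    rw [this, Function.update_self]
  · rw [if_neg hj]
    by_cases hr : 1 ≤ j ∧ j ≤ M - 1
    · rw [dif_pos hr, dif_pos hr]
      rw [Function.update_of_ne]
      intro h
      apply hj
      have := Fin.mk.injEq (j-1) (by omega : j - 1 < M - 1) i.val i.isLt
      rw [h] at *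
      simp at this ⊢
      omega
    · rw [dif_neg hr, dif_neg hr]

lemma hasDerivAt_cexp_real (c : ℂ) (t : ℝ) :
    HasDerivAt (fun t : ℝ => Complex.exp (c * t)) (c * Complex.exp (c * t)) t := by
  have h : HasDerivAt (fun z : ℂ => Complex.exp (c * z)) (c * Complex.exp (c * t)) (t : ℂ) := by
    simpa [mul_comm, Function.comp_def] using
      (Complex.hasDerivAt_exp (c * t)).comp (t : ℂ) ((hasDerivAt_id (t : ℂ)).const_mul c)
  exact h.comp_ofReal

lemma hasDerivAt_re_div {f g : ℝ → ℂ} {f' g' : ℂ} {t : ℝ} (hf : HasDerivAt f f' t)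
    (hg : HasDerivAt g g' t) (h0 : g t ≠ 0) :
    HasDerivAt (fun t => (f t / g t).re) (((f' * g t - f t * g') / (g t) ^ 2).re) t := by
  have h := hf.div hg h0
  exact (Complex.reCLM.hasFDerivAt.comp_hasDerivAt t h)

/-- v = exp(-2iθ₁) -/
def vC (M n : ℕ) : ℂ := Complex.exp (-2 * Complex.I * (th1 M n : ℂ))
/-- u = exp(2iθ₁) -/
def uC (M n : ℕ) : ℂ := Complex.exp (2 * Complex.I * (th1 M n : ℂ))

lemma uv_mul : uC M n * vC M n = 1 := by
  rw [uC, vC, ← Complex.exp_add]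
  rw [show 2 * Complex.I * (th1 M n : ℂ) + -2 * Complex.I * (th1 M n : ℂ) = 0 by ring]
  exact Complex.exp_zero

lemma vC_ne : vC M n ≠ 0 := Complex.exp_ne_zero _
lemma uC_ne : uC M n ≠ 0 := Complex.exp_ne_zero _

lemma vC_eq : vC M n = ((2 * Real.cos (th1 M n) ^ 2 - 1 : ℝ) : ℂ) -
    ((2 * Real.sin (th1 M n) * Real.cos (th1 M n) : ℝ) : ℂ) * Complex.I := by
  rw [vC, show (-2 * Complex.I * (th1 M n : ℂ)) = ((-(2 * th1 M n) : ℝ) : ℂ) * Complex.I by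
    push_cast; ring, Complex.exp_mul_I]
  rw [← Complex.ofReal_cos, ← Complex.ofReal_sin]
  rw [Real.cos_neg, Real.sin_neg, Real.cos_two_mul, Real.sin_two_mul]
  push_cast
  ring

lemma uC_eq : uC M n = ((2 * Real.cos (th1 M n) ^ 2 - 1 : ℝ) : ℂ) +
    ((2 * Real.sin (th1 M n) * Real.cos (th1 M n) : ℝ) : ℂ) * Complex.I := by
  rw [uC, show (2 * Complex.I * (th1 M n : ℂ)) = (((2 * th1 M n) : ℝ) : ℂ) * Complex.I by
    push_cast; ring, Complex.exp_mul_I]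
  rw [← Complex.ofReal_cos, ← Complex.ofReal_sin]
  rw [Real.cos_two_mul, Real.sin_two_mul]

lemma negv_ne_one' (s c : ℝ) (hc : c ≠ 0) :
    -(((2 * c ^ 2 - 1 : ℝ) : ℂ) - ((2 * s * c : ℝ) : ℂ) * Complex.I) ≠ 1 := by
  intro h
  have h2 : (-(((2 * c ^ 2 - 1 : ℝ) : ℂ) - ((2 * s * c : ℝ) : ℂ) * Complex.I) - 1).re = 0 := by
    rw [h]; simp
  simp [Complex.sub_re, Complex.neg_re, Complex.ofReal_re, Complex.mul_re,
    ← Complex.ofReal_pow] at h2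
  exact hc (by nlinarith)

lemma negv_ne_one (hM : 3 ≤ M) (hModd : Odd M) (hn : n = 1 ∨ n = 2) :
    -vC M n ≠ 1 := by
  rw [vC_eq]
  exact negv_ne_one' _ _ (cos_th1_ne hM hModd hn)

lemma negu_ne_one' (s c : ℝ) (hc : c ≠ 0) :
    -(((2 * c ^ 2 - 1 : ℝ) : ℂ) + ((2 * s * c : ℝ) : ℂ) * Complex.I) ≠ 1 := by
  intro h
  have h2 : (-(((2 * c ^ 2 - 1 : ℝ) : ℂ) + ((2 * s * c : ℝ) : ℂ) * Complex.I) - 1).re = 0 := by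
    rw [h]; simp
  simp [Complex.sub_re, Complex.neg_re, Complex.ofReal_re, Complex.mul_re,
    ← Complex.ofReal_pow] at h2
  exact hc (by nlinarith)

lemma negu_ne_one (hM : 3 ≤ M) (hModd : Odd M) (hn : n = 1 ∨ n = 2) :
    -uC M n ≠ 1 := by
  rw [uC_eq]
  exact negu_ne_one' _ _ (cos_th1_ne hM hModd hn)

lemma vC_pow_M (hM : 3 ≤ M) : (vC M n) ^ M = 1 := by
  rw [vC, ← Complex.exp_nat_mul]
  rw [show (M : ℂ) * (-2 * Complex.I * (th1 M n : ℂ)) = ((-n : ℤ) : ℂ) * (2 * (π : ℂ) * Complex.I) by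
    rw [th1]
    have hM0 : (M : ℂ) ≠ 0 := by
      simp; omega
    push_cast
    field_simp]
  exact Complex.exp_int_mul_two_pi_mul_I _

lemma negv_pow_M (hM : 3 ≤ M) (hModd : Odd M) : (-vC M n) ^ M = -1 := by
  rw [neg_pow, vC_pow_M hM, hModd.neg_one_pow, mul_one]

lemma Kdiv_val' (s c : ℝ) (hc : c ≠ 0) (hpyth : s ^ 2 + c ^ 2 = 1)
    (hd : -(((2 * c ^ 2 - 1 : ℝ) : ℂ) - ((2 * s * c : ℝ) : ℂ) * Complex.I) - 1 ≠ 0) :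
    (-(((2 * c ^ 2 - 1 : ℝ) : ℂ) - ((2 * s * c : ℝ) : ℂ) * Complex.I) + 1) /
        (-(((2 * c ^ 2 - 1 : ℝ) : ℂ) - ((2 * s * c : ℝ) : ℂ) * Complex.I) - 1) =
      -Complex.I * ((s : ℂ) / (c : ℂ)) := by
  have hc' : (c : ℂ) ≠ 0 := by exact_mod_cast hc
  rw [div_eq_iff hd]
  apply Complex.ext <;>
    simp [Complex.mul_re, Complex.mul_im, Complex.div_re, Complex.div_im, Complex.normSq,
      ← Complex.ofReal_pow] <;>
    field_simp <;> nlinarith [hpyth]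

lemma Kdiv_val (hM : 3 ≤ M) (hModd : Odd M) (hn : n = 1 ∨ n = 2) :
    (-vC M n + 1) / (-vC M n - 1) =
      -Complex.I * ((Real.sin (th1 M n) : ℂ) / (Real.cos (th1 M n) : ℂ)) := by
  have hd : -vC M n - 1 ≠ 0 := sub_ne_zero.mpr (negv_ne_one hM hModd hn)
  rw [vC_eq] at hd ⊢
  exact Kdiv_val' _ _ (cos_th1_ne hM hModd hn) (Real.sin_sq_add_cos_sq _) hd

lemma exp_neg_thbar (k : ℕ) (hk : k ≤ M - 1) :
    Complex.exp (-2 * Complex.I * (thN M (ThbarV M n) k : ℂ)) = vC M n ^ k := by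
  rw [thN_thbar M n k hk, vC, ← Complex.exp_nat_mul]
  congr 1
  rw [thbarZ, th1]
  push_cast
  ring

lemma exp_pos_sub_thbar (j k : ℕ) (hkj : k ≤ j) (hj : j ≤ M - 1) :
    Complex.exp (2 * Complex.I *
        ((thN M (ThbarV M n) j - thN M (ThbarV M n) k : ℝ) : ℂ)) = uC M n ^ (j - k) := by
  rw [thN_thbar M n j hj, thN_thbar M n k (by omega), uC, ← Complex.exp_nat_mul]
  congr 1
  rw [thbarZ, thbarZ, th1]
  push_cast [Nat.cast_sub hkj]
  ring

lemma exp_neg_sub_thbar (j k : ℕ) (hkj : j ≤ k) (hk : k ≤ M - 1) :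
    Complex.exp (2 * Complex.I *
        ((thN M (ThbarV M n) j - thN M (ThbarV M n) k : ℝ) : ℂ)) = vC M n ^ (k - j) := by
  rw [thN_thbar M n j (by omega), thN_thbar M n k hk, vC, ← Complex.exp_nat_mul]
  congr 1
  rw [thbarZ, thbarZ, th1]
  push_cast [Nat.cast_sub hkj]
  ring

lemma K0_val (hM : 3 ≤ M) (hModd : Odd M) (hn : n = 1 ∨ n = 2) :
    KbarV M (ThbarV M n) = (-vC M n + 1) / (-vC M n - 1) := by
  have hw1 : -vC M n ≠ 1 := negv_ne_one hM hModd hn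
  have hwM : (-vC M n) ^ M = -1 := negv_pow_M hM hModd
  have hd : -vC M n - 1 ≠ 0 := sub_ne_zero.mpr hw1
  rw [KbarV, hModd.neg_one_pow]
  have hsum : ∑ k ∈ Finset.Icc 1 (M - 1),
      (-1 : ℂ) ^ k * Complex.exp (-2 * Complex.I * (thN M (ThbarV M n) k : ℂ)) =
      ∑ k ∈ Finset.Icc 1 (M - 1), (-vC M n) ^ k := by
    apply Finset.sum_congr rfl
    intro k hk
    simp only [Finset.mem_Icc] at hk
    rw [exp_neg_thbar k hk.2, neg_pow (vC M n) k]
  rw [hsum]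
  have hIcc : Finset.Icc 1 (M - 1) = Finset.Ico 1 M := by
    rw [← Finset.Ico_add_one_right_eq_Icc]; congr 1; omega
  rw [hIcc]
  have h1 : ∑ k ∈ Finset.Ico 0 M, (-vC M n) ^ k =
      (-vC M n) ^ 0 + ∑ k ∈ Finset.Ico 1 M, (-vC M n) ^ k :=
    Finset.sum_eq_sum_Ico_succ_bot (by omega) _
  have h2 : ∑ k ∈ Finset.Ico 0 M, (-vC M n) ^ k = ((-vC M n) ^ M - 1) / (-vC M n - 1) := by
    rw [← Finset.range_eq_Ico]; exact geom_sum_eq hw1 M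
  have h3 : ∑ k ∈ Finset.Ico 1 M, (-vC M n) ^ k =
      ((-vC M n) ^ M - 1) / (-vC M n - 1) - 1 := by
    rw [pow_zero] at h1
    linear_combination h2 - h1
  rw [h3, hwM]
  field_simp
  ring

lemma H0_val (hM : 3 ≤ M) (hModd : Odd M) (hn : n = 1 ∨ n = 2)
    (l : ℕ) (hl1 : 1 ≤ l) (hl2 : l ≤ M - 1) :
    HbarV M (ThbarV M n) l = (-vC M n + 1) / (-vC M n - 1) := by
  have hw1 : -vC M n ≠ 1 := negv_ne_one hM hModd hn
  have hz1 : -uC M n ≠ 1 := negu_ne_one hM hModd hn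
  have hwM : (-vC M n) ^ M = -1 := negv_pow_M hM hModd
  have hd : -vC M n - 1 ≠ 0 := sub_ne_zero.mpr hw1
  have hdz : -uC M n - 1 ≠ 0 := sub_ne_zero.mpr hz1
  have hz0 : -uC M n ≠ 0 := neg_ne_zero.mpr uC_ne
  have hw0 : -vC M n ≠ 0 := neg_ne_zero.mpr vC_ne
  have hu1 : 1 + uC M n ≠ 0 := by
    intro h
    apply hdz
    rw [show -uC M n - 1 = -(1 + uC M n) by ring, h, neg_zero]
  have hzw : (-uC M n) * (-vC M n) = 1 := by
    rw [neg_mul_neg]; exact uv_mul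
  rw [HbarV, hModd.neg_one_pow]
  -- first sum
  have hsum1 : ∑ k ∈ Finset.range l, (-1 : ℂ) ^ (l + k) *
      Complex.exp (2 * Complex.I *
        ((thN M (ThbarV M n) l - thN M (ThbarV M n) k : ℝ) : ℂ)) =
      ∑ k ∈ Finset.range l, (-uC M n) ^ (l - k) := by
    apply Finset.sum_congr rfl
    intro k hk
    simp only [Finset.mem_range] at hk
    rw [exp_pos_sub_thbar l k (by omega) hl2, neg_pow (uC M n) (l - k)]
    congr 1
    rw [neg_one_pow_eq_pow_mod_two, neg_one_pow_eq_pow_mod_two (n := l - k)]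
    congr 1
    omega
  have hsum1' : ∑ k ∈ Finset.range l, (-uC M n) ^ (l - k) =
      ((-uC M n) ^ l - 1) / (-uC M n - 1) * (-uC M n) := by
    rw [← Finset.sum_range_reflect]
    have h1 : ∀ k ∈ Finset.range l, (-uC M n) ^ (l - (l - 1 - k)) = (-uC M n) ^ (k + 1) := by
      intro k hk
      simp only [Finset.mem_range] at hk
      congr 1
      omega
    rw [Finset.sum_congr rfl h1]
    have h2 : ∀ k ∈ Finset.range l, (-uC M n) ^ (k + 1) = (-uC M n) ^ k * (-uC M n) := by
      intro k _; rw [pow_succ]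
    rw [Finset.sum_congr rfl h2, ← Finset.sum_mul, geom_sum_eq hz1]
  -- second sum
  have hsum2 : ∑ k ∈ Finset.Icc l (M - 1), (-1 : ℂ) ^ (l + k) *
      Complex.exp (2 * Complex.I *
        ((thN M (ThbarV M n) l - thN M (ThbarV M n) k : ℝ) : ℂ)) =
      ∑ k ∈ Finset.Icc l (M - 1), (-vC M n) ^ (k - l) := by
    apply Finset.sum_congr rfl
    intro k hk
    simp only [Finset.mem_Icc] at hk
    rw [exp_neg_sub_thbar l k hk.1 hk.2, neg_pow (vC M n) (k - l)]
    congr 1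
    rw [neg_one_pow_eq_pow_mod_two, neg_one_pow_eq_pow_mod_two (n := k - l)]
    congr 1
    omega
  have hsum2' : ∑ k ∈ Finset.Icc l (M - 1), (-vC M n) ^ (k - l) =
      ((-vC M n) ^ (M - l) - 1) / (-vC M n - 1) := by
    rw [← Finset.Ico_add_one_right_eq_Icc, Finset.sum_Ico_eq_sum_range]
    have h1 : ∀ k ∈ Finset.range (M - 1 + 1 - l), (-vC M n) ^ (l + k - l) = (-vC M n) ^ k := by
      intro k _; congr 1; omega
    rw [Finset.sum_congr rfl h1]
    have h2 : M - 1 + 1 - l = M - l := by omega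
    rw [h2, geom_sum_eq hw1]
  rw [hsum1, hsum2, hsum1', hsum2']
  -- w^{M-l} = -z^l
  have hml : (-vC M n) ^ (M - l) = -(-uC M n) ^ l := by
    have h1 : (-vC M n) ^ (M - l) * (-vC M n) ^ l = (-vC M n) ^ M := by
      rw [← pow_add]; congr 1; omega
    have h2 : (-uC M n) ^ l * (-vC M n) ^ l = 1 := by
      rw [← mul_pow, hzw, one_pow]
    calc (-vC M n) ^ (M - l) = (-vC M n) ^ (M - l) * ((-uC M n) ^ l * (-vC M n) ^ l) := by
          rw [h2, mul_one]
      _ = (-uC M n) ^ l * ((-vC M n) ^ (M - l) * (-vC M n) ^ l) := by ring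
      _ = (-uC M n) ^ l * (-vC M n) ^ M := by rw [h1]
      _ = -(-uC M n) ^ l := by rw [hwM]; ring
  rw [hml]
  have huv : -vC M n = (-uC M n)⁻¹ := by
    exact eq_inv_of_mul_eq_one_right hzw
  rw [huv] at hd ⊢
  have hu1' : -1 - uC M n ≠ 0 := by intro h; apply hu1; linear_combination -h
  field_simp [hu1, hu1', uC_ne]
  ring

lemma thN_update_thbar (m : ℕ) (hm1 : 1 ≤ m) (hm2 : m ≤ M - 1) (t : ℝ) (j : ℕ) (hj : j ≤ M - 1) :
    thN M (Function.update (ThbarV M n) ⟨m - 1, by omega⟩ t) j =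
      if j = m then t else thbarZ M n j := by
  rw [thN_update]
  have h1 : (⟨m - 1, by omega⟩ : Fin (M - 1)).val + 1 = m := by simp; omega
  rw [h1, thN_thbar M n j hj]

lemma sum_update_diff {s : Finset ℕ} {F G : ℕ → ℂ} {m : ℕ} (hm : m ∈ s)
    (h : ∀ k ∈ s, k ≠ m → F k = G k) :
    ∑ k ∈ s, F k = ∑ k ∈ s, G k + (F m - G m) := by
  have h2 : ∑ k ∈ s, (F k - G k) = F m - G m :=
    Finset.sum_eq_single_of_mem m hm (fun b hb hne => by rw [h b hb hne]; ring)
  rw [Finset.sum_sub_distrib] at h2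
  linear_combination h2

lemma KbarV_update (hModd : Odd M) (m : ℕ) (hm1 : 1 ≤ m) (hm2 : m ≤ M - 1) (t : ℝ) :
    KbarV M (Function.update (ThbarV M n) ⟨m - 1, by omega⟩ t) =
      KbarV M (ThbarV M n) + (-1 : ℂ) ^ (m + 1) *
        (Complex.exp (-2 * Complex.I * (t : ℂ)) -
          Complex.exp (-2 * Complex.I * ((thbarZ M n m : ℝ) : ℂ))) := by
  rw [KbarV, KbarV]
  have hdiff : ∑ k ∈ Finset.Icc 1 (M - 1), (-1 : ℂ) ^ k *
        Complex.exp (-2 * Complex.I *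
          (thN M (Function.update (ThbarV M n) ⟨m - 1, by omega⟩ t) k : ℂ)) =
      (∑ k ∈ Finset.Icc 1 (M - 1), (-1 : ℂ) ^ k *
        Complex.exp (-2 * Complex.I * (thN M (ThbarV M n) k : ℂ))) +
      ((-1 : ℂ) ^ m * Complex.exp (-2 * Complex.I * (t : ℂ)) -
        (-1 : ℂ) ^ m * Complex.exp (-2 * Complex.I * ((thbarZ M n m : ℝ) : ℂ))) := by
    have := sum_update_diff (s := Finset.Icc 1 (M - 1))
      (F := fun k => (-1 : ℂ) ^ k * Complex.exp (-2 * Complex.I *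
        (thN M (Function.update (ThbarV M n) ⟨m - 1, by omega⟩ t) k : ℂ)))
      (G := fun k => (-1 : ℂ) ^ k *
        Complex.exp (-2 * Complex.I * (thN M (ThbarV M n) k : ℂ)))
      (m := m) (by simp [Finset.mem_Icc]; omega)
      (fun k hk hne => by
        beta_reduce
        simp only [Finset.mem_Icc] at hk
        rw [thN_update_thbar m hm1 hm2 t k hk.2, if_neg hne, thN_thbar M n k hk.2])
    rw [this]
    beta_reduce
    rw [thN_update_thbar m hm1 hm2 t m hm2, if_pos rfl, thN_thbar M n m hm2]
  rw [hdiff, hModd.neg_one_pow]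
  rw [pow_succ]
  ring

lemma HbarV_update_lt (hModd : Odd M) (l m : ℕ) (hm1 : 1 ≤ m) (hml : m < l)
    (hl2 : l ≤ M - 1) (t : ℝ) (hm2 : m ≤ M - 1 := by omega) :
    HbarV M (Function.update (ThbarV M n) ⟨m - 1, by omega⟩ t) l =
      HbarV M (ThbarV M n) l + (-1 : ℂ) ^ (l + m) *
        Complex.exp (2 * Complex.I * ((thbarZ M n l : ℝ) : ℂ)) *
        (Complex.exp (-2 * Complex.I * (t : ℂ)) -
          Complex.exp (-2 * Complex.I * ((thbarZ M n m : ℝ) : ℂ))) := by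
  have hup : ∀ j, j ≤ M - 1 → thN M (Function.update (ThbarV M n) ⟨m - 1, by omega⟩ t) j =
      if j = m then t else thbarZ M n j := fun j hj => thN_update_thbar m hm1 hm2 t j hj
  rw [HbarV, HbarV]
  have hsum2 : ∑ k ∈ Finset.Icc l (M - 1), (-1 : ℂ) ^ (l + k) *
        Complex.exp (2 * Complex.I *
          ((thN M (Function.update (ThbarV M n) ⟨m - 1, by omega⟩ t) l -
            thN M (Function.update (ThbarV M n) ⟨m - 1, by omega⟩ t) k : ℝ) : ℂ)) =
      ∑ k ∈ Finset.Icc l (M - 1), (-1 : ℂ) ^ (l + k) *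
        Complex.exp (2 * Complex.I *
          ((thN M (ThbarV M n) l - thN M (ThbarV M n) k : ℝ) : ℂ)) := by
    apply Finset.sum_congr rfl
    intro k hk
    simp only [Finset.mem_Icc] at hk
    rw [hup l hl2, if_neg (by omega), hup k hk.2, if_neg (by omega),
      thN_thbar M n l hl2, thN_thbar M n k hk.2]
  have hsum1 : ∑ k ∈ Finset.range l, (-1 : ℂ) ^ (l + k) *
        Complex.exp (2 * Complex.I *
          ((thN M (Function.update (ThbarV M n) ⟨m - 1, by omega⟩ t) l -
            thN M (Function.update (ThbarV M n) ⟨m - 1, by omega⟩ t) k : ℝ) : ℂ)) =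
      (∑ k ∈ Finset.range l, (-1 : ℂ) ^ (l + k) *
        Complex.exp (2 * Complex.I *
          ((thN M (ThbarV M n) l - thN M (ThbarV M n) k : ℝ) : ℂ))) +
      ((-1 : ℂ) ^ (l + m) * Complex.exp (2 * Complex.I * ((thbarZ M n l - t : ℝ) : ℂ)) -
        (-1 : ℂ) ^ (l + m) *
          Complex.exp (2 * Complex.I * ((thbarZ M n l - thbarZ M n m : ℝ) : ℂ))) := by
    have := sum_update_diff (s := Finset.range l)
      (F := fun k => (-1 : ℂ) ^ (l + k) * Complex.exp (2 * Complex.I *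
          ((thN M (Function.update (ThbarV M n) ⟨m - 1, by omega⟩ t) l -
            thN M (Function.update (ThbarV M n) ⟨m - 1, by omega⟩ t) k : ℝ) : ℂ)))
      (G := fun k => (-1 : ℂ) ^ (l + k) * Complex.exp (2 * Complex.I *
          ((thN M (ThbarV M n) l - thN M (ThbarV M n) k : ℝ) : ℂ)))
      (m := m) (by simp; omega)
      (fun k hk hne => by
        beta_reduce
        simp only [Finset.mem_range] at hk
        rw [hup l hl2, if_neg (by omega), hup k (by omega), if_neg hne,
          thN_thbar M n l hl2, thN_thbar M n k (by omega)])
    rw [this]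
    beta_reduce
    rw [hup m hm2, if_pos rfl, thN_thbar M n m hm2, hup l hl2, if_neg (by omega),
      thN_thbar M n l hl2]
  rw [hsum1, hsum2]
  have he1 : Complex.exp (2 * Complex.I * ((thbarZ M n l - t : ℝ) : ℂ)) =
      Complex.exp (2 * Complex.I * ((thbarZ M n l : ℝ) : ℂ)) *
        Complex.exp (-2 * Complex.I * (t : ℂ)) := by
    rw [← Complex.exp_add]
    congr 1
    push_cast
    ring
  have he2 : Complex.exp (2 * Complex.I * ((thbarZ M n l - thbarZ M n m : ℝ) : ℂ)) =
      Complex.exp (2 * Complex.I * ((thbarZ M n l : ℝ) : ℂ)) *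
        Complex.exp (-2 * Complex.I * ((thbarZ M n m : ℝ) : ℂ)) := by
    rw [← Complex.exp_add]
    congr 1
    push_cast
    ring
  rw [he1, he2]
  ring

lemma HbarV_update_gt (hModd : Odd M) (l m : ℕ) (hl1 : 1 ≤ l) (hlm : l < m)
    (hm2 : m ≤ M - 1) (t : ℝ) :
    HbarV M (Function.update (ThbarV M n) ⟨m - 1, by omega⟩ t) l =
      HbarV M (ThbarV M n) l + (-1 : ℂ) ^ (l + m + 1) *
        Complex.exp (2 * Complex.I * ((thbarZ M n l : ℝ) : ℂ)) *
        (Complex.exp (-2 * Complex.I * (t : ℂ)) -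
          Complex.exp (-2 * Complex.I * ((thbarZ M n m : ℝ) : ℂ))) := by
  have hm1 : 1 ≤ m := by omega
  have hl2 : l ≤ M - 1 := by omega
  have hup : ∀ j, j ≤ M - 1 → thN M (Function.update (ThbarV M n) ⟨m - 1, by omega⟩ t) j =
      if j = m then t else thbarZ M n j := fun j hj => thN_update_thbar m hm1 hm2 t j hj
  rw [HbarV, HbarV]
  have hsum1 : ∑ k ∈ Finset.range l, (-1 : ℂ) ^ (l + k) *
        Complex.exp (2 * Complex.I *
          ((thN M (Function.update (ThbarV M n) ⟨m - 1, by omega⟩ t) l -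
            thN M (Function.update (ThbarV M n) ⟨m - 1, by omega⟩ t) k : ℝ) : ℂ)) =
      ∑ k ∈ Finset.range l, (-1 : ℂ) ^ (l + k) *
        Complex.exp (2 * Complex.I *
          ((thN M (ThbarV M n) l - thN M (ThbarV M n) k : ℝ) : ℂ)) := by
    apply Finset.sum_congr rfl
    intro k hk
    simp only [Finset.mem_range] at hk
    rw [hup l hl2, if_neg (by omega), hup k (by omega), if_neg (by omega),
      thN_thbar M n l hl2, thN_thbar M n k (by omega)]
  have hsum2 : ∑ k ∈ Finset.Icc l (M - 1), (-1 : ℂ) ^ (l + k) *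
        Complex.exp (2 * Complex.I *
          ((thN M (Function.update (ThbarV M n) ⟨m - 1, by omega⟩ t) l -
            thN M (Function.update (ThbarV M n) ⟨m - 1, by omega⟩ t) k : ℝ) : ℂ)) =
      (∑ k ∈ Finset.Icc l (M - 1), (-1 : ℂ) ^ (l + k) *
        Complex.exp (2 * Complex.I *
          ((thN M (ThbarV M n) l - thN M (ThbarV M n) k : ℝ) : ℂ))) +
      ((-1 : ℂ) ^ (l + m) * Complex.exp (2 * Complex.I * ((thbarZ M n l - t : ℝ) : ℂ)) -
        (-1 : ℂ) ^ (l + m) *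
          Complex.exp (2 * Complex.I * ((thbarZ M n l - thbarZ M n m : ℝ) : ℂ))) := by
    have := sum_update_diff (s := Finset.Icc l (M - 1))
      (F := fun k => (-1 : ℂ) ^ (l + k) * Complex.exp (2 * Complex.I *
          ((thN M (Function.update (ThbarV M n) ⟨m - 1, by omega⟩ t) l -
            thN M (Function.update (ThbarV M n) ⟨m - 1, by omega⟩ t) k : ℝ) : ℂ)))
      (G := fun k => (-1 : ℂ) ^ (l + k) * Complex.exp (2 * Complex.I *
          ((thN M (ThbarV M n) l - thN M (ThbarV M n) k : ℝ) : ℂ)))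
      (m := m) (by simp [Finset.mem_Icc]; omega)
      (fun k hk hne => by
        beta_reduce
        simp only [Finset.mem_Icc] at hk
        rw [hup l hl2, if_neg (by omega), hup k hk.2, if_neg hne,
          thN_thbar M n l hl2, thN_thbar M n k hk.2])
    rw [this]
    beta_reduce
    rw [hup m hm2, if_pos rfl, thN_thbar M n m hm2, hup l hl2, if_neg (by omega),
      thN_thbar M n l hl2]
  rw [hsum1, hsum2]
  have he1 : Complex.exp (2 * Complex.I * ((thbarZ M n l - t : ℝ) : ℂ)) =
      Complex.exp (2 * Complex.I * ((thbarZ M n l : ℝ) : ℂ)) *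
        Complex.exp (-2 * Complex.I * (t : ℂ)) := by
    rw [← Complex.exp_add]
    congr 1
    push_cast
    ring
  have he2 : Complex.exp (2 * Complex.I * ((thbarZ M n l - thbarZ M n m : ℝ) : ℂ)) =
      Complex.exp (2 * Complex.I * ((thbarZ M n l : ℝ) : ℂ)) *
        Complex.exp (-2 * Complex.I * ((thbarZ M n m : ℝ) : ℂ)) := by
    rw [← Complex.exp_add]
    congr 1
    push_cast
    ring
  rw [he1, he2, hModd.neg_one_pow, pow_succ]
  ring

lemma HbarV_update_eq (hModd : Odd M) (l : ℕ) (hl1 : 1 ≤ l) (hl2 : l ≤ M - 1) (t : ℝ) :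
    HbarV M (Function.update (ThbarV M n) ⟨l - 1, by omega⟩ t) l =
      Complex.exp (2 * Complex.I * ((t - thbarZ M n l : ℝ) : ℂ)) *
        HbarV M (ThbarV M n) l := by
  have hup : ∀ j, j ≤ M - 1 → thN M (Function.update (ThbarV M n) ⟨l - 1, by omega⟩ t) j =
      if j = l then t else thbarZ M n j := fun j hj => thN_update_thbar l hl1 hl2 t j hj
  have hM1 : 3 ≤ M ∨ True := Or.inr trivial
  set E := Complex.exp (2 * Complex.I * ((t - thbarZ M n l : ℝ) : ℂ)) with hE
  have hIco : Finset.Icc l (M - 1) = Finset.Ico l M := by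
    rw [← Finset.Ico_add_one_right_eq_Icc]
    congr 1
    omega
  rw [HbarV, HbarV, hModd.neg_one_pow, hIco]
  rw [Finset.sum_eq_sum_Ico_succ_bot (show l < M by omega), 
      Finset.sum_eq_sum_Ico_succ_bot (show l < M by omega)]
  -- the l-terms
  have hFl : (-1 : ℂ) ^ (l + l) * Complex.exp (2 * Complex.I *
      ((thN M (Function.update (ThbarV M n) ⟨l - 1, by omega⟩ t) l -
        thN M (Function.update (ThbarV M n) ⟨l - 1, by omega⟩ t) l : ℝ) : ℂ)) = 1 := by
    rw [sub_self]
    simp [← two_mul, pow_mul]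
  have hGl : (-1 : ℂ) ^ (l + l) * Complex.exp (2 * Complex.I *
      ((thN M (ThbarV M n) l - thN M (ThbarV M n) l : ℝ) : ℂ)) = 1 := by
    rw [sub_self]
    simp [← two_mul, pow_mul]
  rw [hFl, hGl]
  -- the sums transform termwise
  have hS1 : ∑ k ∈ Finset.range l, (-1 : ℂ) ^ (l + k) *
        Complex.exp (2 * Complex.I *
          ((thN M (Function.update (ThbarV M n) ⟨l - 1, by omega⟩ t) l -
            thN M (Function.update (ThbarV M n) ⟨l - 1, by omega⟩ t) k : ℝ) : ℂ)) =
      E * ∑ k ∈ Finset.range l, (-1 : ℂ) ^ (l + k) *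
        Complex.exp (2 * Complex.I *
          ((thN M (ThbarV M n) l - thN M (ThbarV M n) k : ℝ) : ℂ)) := by
    rw [Finset.mul_sum]
    apply Finset.sum_congr rfl
    intro k hk
    simp only [Finset.mem_range] at hk
    rw [hup l hl2, if_pos rfl, hup k (by omega), if_neg (by omega),
      thN_thbar M n l hl2, thN_thbar M n k (by omega)]
    have hexp : Complex.exp (2 * Complex.I * ((t - thbarZ M n k : ℝ) : ℂ)) =
        Complex.exp (2 * Complex.I * ((t - thbarZ M n l : ℝ) : ℂ)) *
          Complex.exp (2 * Complex.I * ((thbarZ M n l - thbarZ M n k : ℝ) : ℂ)) := by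
      rw [← Complex.exp_add]
      congr 1
      push_cast
      ring
    rw [hexp]
    ring
  have hS2 : ∑ k ∈ Finset.Ico (l + 1) M, (-1 : ℂ) ^ (l + k) *
        Complex.exp (2 * Complex.I *
          ((thN M (Function.update (ThbarV M n) ⟨l - 1, by omega⟩ t) l -
            thN M (Function.update (ThbarV M n) ⟨l - 1, by omega⟩ t) k : ℝ) : ℂ)) =
      E * ∑ k ∈ Finset.Ico (l + 1) M, (-1 : ℂ) ^ (l + k) *
        Complex.exp (2 * Complex.I *
          ((thN M (ThbarV M n) l - thN M (ThbarV M n) k : ℝ) : ℂ)) := by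
    rw [Finset.mul_sum]
    apply Finset.sum_congr rfl
    intro k hk
    simp only [Finset.mem_Ico] at hk
    rw [hup l hl2, if_pos rfl, hup k (by omega), if_neg (by omega),
      thN_thbar M n l hl2, thN_thbar M n k (by omega)]
    have hexp : Complex.exp (2 * Complex.I * ((t - thbarZ M n k : ℝ) : ℂ)) =
        Complex.exp (2 * Complex.I * ((t - thbarZ M n l : ℝ) : ℂ)) *
          Complex.exp (2 * Complex.I * ((thbarZ M n l - thbarZ M n k : ℝ) : ℂ)) := by
      rw [← Complex.exp_add]
      congr 1
      push_cast
      ring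
    rw [hexp]
    ring
  rw [hS1, hS2]
  ring

end Aux


lemma thbarZ_sub (M n : ℕ) (a b : ℤ) : thbarZ M n a - thbarZ M n b = thbarZ M n (a - b) := by
  unfold thbarZ
  push_cast
  ring

lemma exp_neg_two_eq (x : ℝ) : Complex.exp (-2 * Complex.I * (x : ℂ)) =
    ((Real.cos (2 * x) : ℝ) : ℂ) - ((Real.sin (2 * x) : ℝ) : ℂ) * Complex.I := by
  rw [show -2 * Complex.I * (x : ℂ) = ((-(2 * x) : ℝ) : ℂ) * Complex.I by push_cast; ring,
    Complex.exp_mul_I, ← Complex.ofReal_cos, ← Complex.ofReal_sin, Real.cos_neg, Real.sin_neg]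
  push_cast
  ring

lemma exp_pos_two_eq (x : ℝ) : Complex.exp (2 * Complex.I * (x : ℂ)) =
    ((Real.cos (2 * x) : ℝ) : ℂ) + ((Real.sin (2 * x) : ℝ) : ℂ) * Complex.I := by
  rw [show 2 * Complex.I * (x : ℂ) = (((2 * x) : ℝ) : ℂ) * Complex.I by push_cast; ring,
    Complex.exp_mul_I, ← Complex.ofReal_cos, ← Complex.ofReal_sin]

set_option maxHeartbeats 1000000 in
theorem grad_Gbar_at_thbar (M n : ℕ) (hM : 3 ≤ M) (hModd : Odd M)
    (hn : n = 1 ∨ n = 2) :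
    ∀ l m : ℕ, ∀ (_hl1 : 1 ≤ l) (_hl2 : l ≤ M - 1) (hm1 : 1 ≤ m) (hm2 : m ≤ M - 1),
      (l = m →
        Real.sin (thbarZ M n 1) ^ 2 * partialG M l (ThbarV M n) ⟨m - 1, by omega⟩ =
          (-1 : ℝ) ^ m * Real.cos (2 * thbarZ M n m) * Real.sin (2 * thbarZ M n 1)) ∧
      (l < m →
        Real.sin (thbarZ M n 1) ^ 2 * partialG M l (ThbarV M n) ⟨m - 1, by omega⟩ =
          (-1 : ℝ) ^ m * Real.sin (2 * thbarZ M n 1) *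
            (Real.cos (2 * thbarZ M n m) -
              (-1 : ℝ) ^ l * Real.cos (2 * thbarZ M n ((l : ℤ) - (m : ℤ))))) ∧
      (m < l →
        Real.sin (thbarZ M n 1) ^ 2 * partialG M l (ThbarV M n) ⟨m - 1, by omega⟩ =
          (-1 : ℝ) ^ m * Real.sin (2 * thbarZ M n 1) *
            (Real.cos (2 * thbarZ M n m) +
              (-1 : ℝ) ^ l * Real.cos (2 * thbarZ M n ((l : ℤ) - (m : ℤ))))) := by
  intro l m hl1 hl2 hm1 hm2
  set s := Real.sin (th1 M n) with hs_def
  set c := Real.cos (th1 M n) with hc_def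
  have hs : s ≠ 0 := ne_of_gt (sin_th1_pos hM hn)
  have hc : c ≠ 0 := cos_th1_ne hM hModd hn
  have hsC : (s : ℂ) ≠ 0 := by exact_mod_cast hs
  have hcC : (c : ℂ) ≠ 0 := by exact_mod_cast hc
  set T : ℂ := -Complex.I * ((s : ℂ) / (c : ℂ)) with hT_def
  have hK0 : KbarV M (ThbarV M n) = T := by
    rw [K0_val hM hModd hn, Kdiv_val hM hModd hn]
  have hH0 : HbarV M (ThbarV M n) l = T := by
    rw [H0_val hM hModd hn l hl1 hl2, Kdiv_val hM hModd hn]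
  have hTne : T ≠ 0 := by
    apply mul_ne_zero (neg_ne_zero.mpr Complex.I_ne_zero) (div_ne_zero hsC hcC)
  have hTmul : T * (Complex.I * ((c : ℂ) / (s : ℂ))) = 1 := by
    rw [hT_def]
    field_simp
    linear_combination (-1 : ℂ) * Complex.I_mul_I
  have hTinv : T⁻¹ = Complex.I * ((c : ℂ) / (s : ℂ)) := inv_eq_of_mul_eq_one_right hTmul
  clear_value T
  have hK0ne : KbarV M (ThbarV M n) ≠ 0 := by rw [hK0]; exact hTne
  have hth1 : thbarZ M n 1 = th1 M n := by unfold thbarZ th1; norm_num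
  have hsin1 : Real.sin (thbarZ M n 1) = s := by rw [hth1]
  have hsin2 : Real.sin (2 * thbarZ M n 1) = 2 * s * c := by
    rw [hth1, Real.sin_two_mul, hs_def, hc_def]
  have hpt : ThbarV M n ⟨m - 1, by omega⟩ = thbarZ M n (m : ℤ) := by
    unfold ThbarV thbarZ
    simp only
    push_cast [Nat.cast_sub hm1]
    ring
  set θm := thbarZ M n (m : ℤ) with hθm_def
  set E0 : ℂ := Complex.exp (-2 * Complex.I * ((θm : ℝ) : ℂ)) with hE0_def
  have hE0val : E0 = ((Real.cos (2 * θm) : ℝ) : ℂ) - ((Real.sin (2 * θm) : ℝ) : ℂ) * Complex.I :=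
    exp_neg_two_eq θm
  have hgder : HasDerivAt (fun t : ℝ => KbarV M (ThbarV M n) +
      (-1 : ℂ) ^ (m + 1) * (Complex.exp (-2 * Complex.I * (t : ℂ)) - E0))
      ((-1 : ℂ) ^ (m + 1) * (-2 * Complex.I * E0)) θm := by
    have h := ((hasDerivAt_cexp_real (-2 * Complex.I) θm).sub_const E0).const_mul
      ((-1 : ℂ) ^ (m + 1))
    exact h.const_add (KbarV M (ThbarV M n))
  have hgval : KbarV M (ThbarV M n) +
      (-1 : ℂ) ^ (m + 1) * (Complex.exp (-2 * Complex.I * ((θm : ℝ) : ℂ)) - E0) =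
      KbarV M (ThbarV M n) := by
    rw [← hE0_def]
    ring
  refine ⟨?_, ?_, ?_⟩
  -- ================= diagonal case =================
  · intro hlm
    subst hlm
    have hx : ∀ t : ℝ, Complex.exp (2 * Complex.I * ((t - thbarZ M n (l : ℤ) : ℝ) : ℂ)) =
        Complex.exp (-2 * Complex.I * ((θm : ℝ) : ℂ)) *
          Complex.exp (2 * Complex.I * (t : ℂ)) := by
      intro t
      rw [← Complex.exp_add]
      congr 1
      rw [hθm_def]
      push_cast
      ring
    have hval : ∀ t : ℝ, GbarV M l (Function.update (ThbarV M n) ⟨l - 1, by omega⟩ t) =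
        (((E0 * HbarV M (ThbarV M n) l) * Complex.exp (2 * Complex.I * (t : ℂ))) /
          (KbarV M (ThbarV M n) +
            (-1 : ℂ) ^ (l + 1) * (Complex.exp (-2 * Complex.I * (t : ℂ)) - E0))).re := by
      intro t
      rw [GbarV, KbarV_update hModd l hm1 hm2 t, HbarV_update_eq hModd l hm1 hm2 t,
        hx t, ← hE0_def]
      congr 1
      ring
    have hfder : HasDerivAt (fun t : ℝ => (E0 * HbarV M (ThbarV M n) l) *
        Complex.exp (2 * Complex.I * (t : ℂ)))
        ((E0 * HbarV M (ThbarV M n) l) * (2 * Complex.I *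
          Complex.exp (2 * Complex.I * ((θm : ℝ) : ℂ)))) θm :=
      (hasDerivAt_cexp_real (2 * Complex.I) θm).const_mul (E0 * HbarV M (ThbarV M n) l)
    have h1 := hasDerivAt_re_div hfder hgder (by rw [hgval]; exact hK0ne)
    have h2 := (h1.congr_of_eventuallyEq
      (Filter.Eventually.of_forall (fun t => hval t))).deriv
    rw [partialG, hpt, h2]
    have hE0E : E0 * Complex.exp (2 * Complex.I * ((θm : ℝ) : ℂ)) = 1 := by
      rw [hE0_def, ← Complex.exp_add]
      rw [show -2 * Complex.I * ((θm : ℝ) : ℂ) + 2 * Complex.I * ((θm : ℝ) : ℂ) = 0 by ring]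
      exact Complex.exp_zero
    have hnum : ((E0 * HbarV M (ThbarV M n) l) * (2 * Complex.I *
          Complex.exp (2 * Complex.I * ((θm : ℝ) : ℂ))) *
          (KbarV M (ThbarV M n) +
            (-1 : ℂ) ^ (l + 1) * (Complex.exp (-2 * Complex.I * ((θm : ℝ) : ℂ)) - E0)) -
        (E0 * HbarV M (ThbarV M n) l) * Complex.exp (2 * Complex.I * ((θm : ℝ) : ℂ)) *
          ((-1 : ℂ) ^ (l + 1) * (-2 * Complex.I * E0))) /
        (KbarV M (ThbarV M n) +
            (-1 : ℂ) ^ (l + 1) * (Complex.exp (-2 * Complex.I * ((θm : ℝ) : ℂ)) - E0)) ^ 2 =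
        (2 * Complex.I * T - (-1 : ℂ) ^ (l + 1) * (-2 * Complex.I * E0)) * T⁻¹ := by
      rw [hgval, hK0]
      rw [show (E0 * HbarV M (ThbarV M n) l) * (2 * Complex.I *
          Complex.exp (2 * Complex.I * ((θm : ℝ) : ℂ))) =
          (E0 * Complex.exp (2 * Complex.I * ((θm : ℝ) : ℂ))) *
            (2 * Complex.I * HbarV M (ThbarV M n) l) by ring, hE0E, one_mul]
      rw [show (E0 * HbarV M (ThbarV M n) l) * Complex.exp (2 * Complex.I * ((θm : ℝ) : ℂ)) =
          (E0 * Complex.exp (2 * Complex.I * ((θm : ℝ) : ℂ))) * HbarV M (ThbarV M n) l by ring,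
        hE0E, one_mul, hH0]
      field_simp
    rw [hnum, hTinv]
    have hgroup : (2 * Complex.I * T - (-1 : ℂ) ^ (l + 1) * (-2 * Complex.I * E0)) *
        (Complex.I * ((c : ℂ) / (s : ℂ))) =
        2 * Complex.I + ((-1 : ℂ) ^ l * (2 * ((c : ℂ) / (s : ℂ)))) * E0 := by
      linear_combination (2 * Complex.I) * hTmul +
        ((-1 : ℂ) ^ (l + 1) * 2 * ((c : ℂ) / (s : ℂ)) * E0) * Complex.I_mul_I
    rw [hgroup, hE0val]
    have hre : (2 * Complex.I + ((-1 : ℂ) ^ l * (2 * ((c : ℂ) / (s : ℂ)))) *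
        (((Real.cos (2 * θm) : ℝ) : ℂ) - ((Real.sin (2 * θm) : ℝ) : ℂ) * Complex.I)) =
        (((-1 : ℝ) ^ l * (2 * (c / s)) * Real.cos (2 * θm) : ℝ) : ℂ) +
        ((2 - (-1 : ℝ) ^ l * (2 * (c / s)) * Real.sin (2 * θm) : ℝ) : ℂ) * Complex.I := by
      push_cast
      ring
    rw [hre]
    simp only [Complex.add_re, Complex.ofReal_re, Complex.mul_re, Complex.ofReal_im,
      Complex.I_re, Complex.I_im, mul_zero, zero_mul, sub_zero, zero_sub, mul_one]
    rw [hsin1, hsin2]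
    field_simp
    ring
  -- ================= l < m =================
  · intro hlm
    set θl := thbarZ M n (l : ℤ) with hθl_def
    set EL : ℂ := Complex.exp (2 * Complex.I * ((θl : ℝ) : ℂ)) with hEL_def
    have hval : ∀ t : ℝ, GbarV M l (Function.update (ThbarV M n) ⟨m - 1, by omega⟩ t) =
        ((HbarV M (ThbarV M n) l + (-1 : ℂ) ^ (l + m + 1) * EL *
            (Complex.exp (-2 * Complex.I * (t : ℂ)) - E0)) /
          (KbarV M (ThbarV M n) +
            (-1 : ℂ) ^ (m + 1) * (Complex.exp (-2 * Complex.I * (t : ℂ)) - E0))).re := by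
      intro t
      rw [GbarV, KbarV_update hModd m hm1 hm2 t, HbarV_update_gt hModd l m hl1 hlm hm2 t]
    have hfder : HasDerivAt (fun t : ℝ => HbarV M (ThbarV M n) l + (-1 : ℂ) ^ (l + m + 1) * EL *
        (Complex.exp (-2 * Complex.I * (t : ℂ)) - E0))
        ((-1 : ℂ) ^ (l + m + 1) * EL * (-2 * Complex.I * E0)) θm := by
      have h := ((hasDerivAt_cexp_real (-2 * Complex.I) θm).sub_const E0).const_mul
        ((-1 : ℂ) ^ (l + m + 1) * EL)
      exact h.const_add (HbarV M (ThbarV M n) l)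
    have hfval : HbarV M (ThbarV M n) l + (-1 : ℂ) ^ (l + m + 1) * EL *
        (Complex.exp (-2 * Complex.I * ((θm : ℝ) : ℂ)) - E0) = HbarV M (ThbarV M n) l := by
      rw [← hE0_def]
      ring
    have h1 := hasDerivAt_re_div hfder hgder (by rw [hgval]; exact hK0ne)
    have h2 := (h1.congr_of_eventuallyEq
      (Filter.Eventually.of_forall (fun t => hval t))).deriv
    rw [partialG, hpt, h2]
    have hELE0 : EL * E0 = ((Real.cos (2 * thbarZ M n ((l : ℤ) - (m : ℤ))) : ℝ) : ℂ) +
        ((Real.sin (2 * thbarZ M n ((l : ℤ) - (m : ℤ))) : ℝ) : ℂ) * Complex.I := by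
      rw [hEL_def, hE0_def, ← Complex.exp_add]
      rw [show 2 * Complex.I * ((θl : ℝ) : ℂ) + -2 * Complex.I * ((θm : ℝ) : ℂ) =
          2 * Complex.I * (((θl - θm : ℝ)) : ℂ) by push_cast; ring]
      rw [hθl_def, hθm_def, thbarZ_sub]
      exact exp_pos_two_eq _
    have hnum : (((-1 : ℂ) ^ (l + m + 1) * EL * (-2 * Complex.I * E0) *
          (KbarV M (ThbarV M n) +
            (-1 : ℂ) ^ (m + 1) * (Complex.exp (-2 * Complex.I * ((θm : ℝ) : ℂ)) - E0)) -
        (HbarV M (ThbarV M n) l + (-1 : ℂ) ^ (l + m + 1) * EL *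
            (Complex.exp (-2 * Complex.I * ((θm : ℝ) : ℂ)) - E0)) *
          ((-1 : ℂ) ^ (m + 1) * (-2 * Complex.I * E0))) /
        (KbarV M (ThbarV M n) +
            (-1 : ℂ) ^ (m + 1) * (Complex.exp (-2 * Complex.I * ((θm : ℝ) : ℂ)) - E0)) ^ 2) =
        ((-1 : ℂ) ^ (l + m + 1) * EL * (-2 * Complex.I * E0) -
          (-1 : ℂ) ^ (m + 1) * (-2 * Complex.I * E0)) * T⁻¹ := by
      rw [hgval, hfval, hH0, hK0]
      field_simp
    rw [hnum, hTinv]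
    have hgroup : ((-1 : ℂ) ^ (l + m + 1) * EL * (-2 * Complex.I * E0) -
          (-1 : ℂ) ^ (m + 1) * (-2 * Complex.I * E0)) * (Complex.I * ((c : ℂ) / (s : ℂ))) =
        ((-1 : ℂ) ^ (l + m + 1) * (EL * E0) - (-1 : ℂ) ^ (m + 1) * E0) *
          (2 * ((c : ℂ) / (s : ℂ))) := by
      linear_combination (-(2 * ((c : ℂ) / (s : ℂ)) *
        ((-1 : ℂ) ^ (l + m + 1) * (EL * E0) - (-1 : ℂ) ^ (m + 1) * E0))) * Complex.I_mul_I
    rw [hgroup, hELE0, hE0val]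
    have hre : (((-1 : ℂ) ^ (l + m + 1) *
          (((Real.cos (2 * thbarZ M n ((l : ℤ) - (m : ℤ))) : ℝ) : ℂ) +
            ((Real.sin (2 * thbarZ M n ((l : ℤ) - (m : ℤ))) : ℝ) : ℂ) * Complex.I) -
          (-1 : ℂ) ^ (m + 1) *
          (((Real.cos (2 * θm) : ℝ) : ℂ) - ((Real.sin (2 * θm) : ℝ) : ℂ) * Complex.I)) *
          (2 * ((c : ℂ) / (s : ℂ)))) =
        ((2 * (c / s) * ((-1 : ℝ) ^ (l + m + 1) * Real.cos (2 * thbarZ M n ((l : ℤ) - (m : ℤ))) -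
            (-1 : ℝ) ^ (m + 1) * Real.cos (2 * θm)) : ℝ) : ℂ) +
        ((2 * (c / s) * ((-1 : ℝ) ^ (l + m + 1) * Real.sin (2 * thbarZ M n ((l : ℤ) - (m : ℤ))) +
            (-1 : ℝ) ^ (m + 1) * Real.sin (2 * θm)) : ℝ) : ℂ) * Complex.I := by
      push_cast
      ring
    rw [hre]
    simp only [Complex.add_re, Complex.ofReal_re, Complex.mul_re, Complex.ofReal_im,
      Complex.I_re, Complex.I_im, mul_zero, zero_mul, sub_zero, zero_sub, mul_one]
    rw [hsin1, hsin2]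
    rw [show (-1 : ℝ) ^ (l + m + 1) = (-1) ^ l * (-1) ^ m * (-1) by
        rw [pow_add, pow_add, pow_one],
      show (-1 : ℝ) ^ (m + 1) = (-1) ^ m * (-1) by rw [pow_add, pow_one]]
    field_simp
    ring
  -- ================= m < l =================
  · intro hlm
    set θl := thbarZ M n (l : ℤ) with hθl_def
    set EL : ℂ := Complex.exp (2 * Complex.I * ((θl : ℝ) : ℂ)) with hEL_def
    have hval : ∀ t : ℝ, GbarV M l (Function.update (ThbarV M n) ⟨m - 1, by omega⟩ t) =
        ((HbarV M (ThbarV M n) l + (-1 : ℂ) ^ (l + m) * EL *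
            (Complex.exp (-2 * Complex.I * (t : ℂ)) - E0)) /
          (KbarV M (ThbarV M n) +
            (-1 : ℂ) ^ (m + 1) * (Complex.exp (-2 * Complex.I * (t : ℂ)) - E0))).re := by
      intro t
      rw [GbarV, KbarV_update hModd m hm1 hm2 t, HbarV_update_lt hModd l m hm1 hlm hl2 t]
    have hfder : HasDerivAt (fun t : ℝ => HbarV M (ThbarV M n) l + (-1 : ℂ) ^ (l + m) * EL *
        (Complex.exp (-2 * Complex.I * (t : ℂ)) - E0))
        ((-1 : ℂ) ^ (l + m) * EL * (-2 * Complex.I * E0)) θm := by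
      have h := ((hasDerivAt_cexp_real (-2 * Complex.I) θm).sub_const E0).const_mul
        ((-1 : ℂ) ^ (l + m) * EL)
      exact h.const_add (HbarV M (ThbarV M n) l)
    have hfval : HbarV M (ThbarV M n) l + (-1 : ℂ) ^ (l + m) * EL *
        (Complex.exp (-2 * Complex.I * ((θm : ℝ) : ℂ)) - E0) = HbarV M (ThbarV M n) l := by
      rw [← hE0_def]
      ring
    have h1 := hasDerivAt_re_div hfder hgder (by rw [hgval]; exact hK0ne)
    have h2 := (h1.congr_of_eventuallyEq
      (Filter.Eventually.of_forall (fun t => hval t))).deriv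
    rw [partialG, hpt, h2]
    have hELE0 : EL * E0 = ((Real.cos (2 * thbarZ M n ((l : ℤ) - (m : ℤ))) : ℝ) : ℂ) +
        ((Real.sin (2 * thbarZ M n ((l : ℤ) - (m : ℤ))) : ℝ) : ℂ) * Complex.I := by
      rw [hEL_def, hE0_def, ← Complex.exp_add]
      rw [show 2 * Complex.I * ((θl : ℝ) : ℂ) + -2 * Complex.I * ((θm : ℝ) : ℂ) =
          2 * Complex.I * (((θl - θm : ℝ)) : ℂ) by push_cast; ring]
      rw [hθl_def, hθm_def, thbarZ_sub]
      exact exp_pos_two_eq _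
    have hnum : (((-1 : ℂ) ^ (l + m) * EL * (-2 * Complex.I * E0) *
          (KbarV M (ThbarV M n) +
            (-1 : ℂ) ^ (m + 1) * (Complex.exp (-2 * Complex.I * ((θm : ℝ) : ℂ)) - E0)) -
        (HbarV M (ThbarV M n) l + (-1 : ℂ) ^ (l + m) * EL *
            (Complex.exp (-2 * Complex.I * ((θm : ℝ) : ℂ)) - E0)) *
          ((-1 : ℂ) ^ (m + 1) * (-2 * Complex.I * E0))) /
        (KbarV M (ThbarV M n) +
            (-1 : ℂ) ^ (m + 1) * (Complex.exp (-2 * Complex.I * ((θm : ℝ) : ℂ)) - E0)) ^ 2) =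
        ((-1 : ℂ) ^ (l + m) * EL * (-2 * Complex.I * E0) -
          (-1 : ℂ) ^ (m + 1) * (-2 * Complex.I * E0)) * T⁻¹ := by
      rw [hgval, hfval, hH0, hK0]
      field_simp
    rw [hnum, hTinv]
    have hgroup : ((-1 : ℂ) ^ (l + m) * EL * (-2 * Complex.I * E0) -
          (-1 : ℂ) ^ (m + 1) * (-2 * Complex.I * E0)) * (Complex.I * ((c : ℂ) / (s : ℂ))) =
        ((-1 : ℂ) ^ (l + m) * (EL * E0) - (-1 : ℂ) ^ (m + 1) * E0) *
          (2 * ((c : ℂ) / (s : ℂ))) := by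
      linear_combination (-(2 * ((c : ℂ) / (s : ℂ)) *
        ((-1 : ℂ) ^ (l + m) * (EL * E0) - (-1 : ℂ) ^ (m + 1) * E0))) * Complex.I_mul_I
    rw [hgroup, hELE0, hE0val]
    have hre : (((-1 : ℂ) ^ (l + m) *
          (((Real.cos (2 * thbarZ M n ((l : ℤ) - (m : ℤ))) : ℝ) : ℂ) +
            ((Real.sin (2 * thbarZ M n ((l : ℤ) - (m : ℤ))) : ℝ) : ℂ) * Complex.I) -
          (-1 : ℂ) ^ (m + 1) *
          (((Real.cos (2 * θm) : ℝ) : ℂ) - ((Real.sin (2 * θm) : ℝ) : ℂ) * Complex.I)) *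
          (2 * ((c : ℂ) / (s : ℂ)))) =
        ((2 * (c / s) * ((-1 : ℝ) ^ (l + m) * Real.cos (2 * thbarZ M n ((l : ℤ) - (m : ℤ))) -
            (-1 : ℝ) ^ (m + 1) * Real.cos (2 * θm)) : ℝ) : ℂ) +
        ((2 * (c / s) * ((-1 : ℝ) ^ (l + m) * Real.sin (2 * thbarZ M n ((l : ℤ) - (m : ℤ))) +
            (-1 : ℝ) ^ (m + 1) * Real.sin (2 * θm)) : ℝ) : ℂ) * Complex.I := by
      push_cast
      ring
    rw [hre]
    simp only [Complex.add_re, Complex.ofReal_re, Complex.mul_re, Complex.ofReal_im,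
      Complex.I_re, Complex.I_im, mul_zero, zero_mul, sub_zero, zero_sub, mul_one]
    rw [hsin1, hsin2]
    rw [show (-1 : ℝ) ^ (l + m) = (-1) ^ l * (-1) ^ m by rw [pow_add],
      show (-1 : ℝ) ^ (m + 1) = (-1) ^ m * (-1) by rw [pow_add, pow_one]]
    field_simp
    ring

end
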